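/- arXiv:1804.11050 — 3 statements merged into one kernel-verified Lean document; each statement's English description precedes it below -/
import Mathlib

section
/- For every integer n ≥ 1, the translate (1,1) + D_n is contained in D_{n+1}. -/
open Pointwise

/-- The submonoid `σ_Z ⊂ ℤ²` of pairs `(a,b)` with `0 ≤ b` and `3b ≤ 4a`. -/
def sigmaZ : Set (ℤ × ℤ) := {a : ℤ × ℤ | 0 ≤ a.2 ∧ 3 * a.2 ≤ 4 * a.1}

/-- The point `p_n`. -/
def pPt (n : ℤ) : ℤ × ℤ := if Odd n then ((n + 3) / 2, 0) else (n / 2 + 1, 0)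

/-- The point `s_n`. -/
def sPt (n : ℤ) : ℤ × ℤ :=
  if Odd n then (3 * (n + 1) / 2, 2 * (n + 1)) else (3 * (n + 2) / 2, 2 * (n + 2))

/-- The point `q^i = (n+1-i, n-2i)`. -/
def qPt (n i : ℤ) : ℤ × ℤ := (n + 1 - i, n - 2 * i)

/-- The point `r^j = (n+1+j, n+1+2j)`. -/
def rPt (n j : ℤ) : ℤ × ℤ := (n + 1 + j, n + 1 + 2 * j)

/-- The set `P_n ⊂ ℤ²`. -/
def Pset (n : ℤ) : Set (ℤ × ℤ) :=
  {pPt n, sPt n}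
    ∪ {x | ∃ i : ℤ, 0 ≤ i ∧ i ≤ (if Odd n then (n - 1) / 2 else (n - 2) / 2) ∧ x = qPt n i}
    ∪ {x | ∃ j : ℤ, 0 ≤ j ∧ j ≤ (if Odd n then (n - 1) / 2 else n / 2) ∧ x = rPt n j}

/-- The set `D_n = σ_Z \ (P_n + σ_Z)`, where `+` is pointwise addition of sets. -/
def Dset (n : ℤ) : Set (ℤ × ℤ) := sigmaZ \ (Pset n + sigmaZ)

lemma mem_sigmaZ {u v : ℤ} (h1 : 0 ≤ v) (h2 : 3 * v ≤ 4 * u) : ((u, v) : ℤ × ℤ) ∈ sigmaZ :=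
  ⟨h1, h2⟩

lemma pPt_mem (n : ℤ) : pPt n ∈ Pset n :=
  Or.inl (Or.inl (Set.mem_insert _ _))

lemma sPt_mem (n : ℤ) : sPt n ∈ Pset n :=
  Or.inl (Or.inl (Set.mem_insert_of_mem _ rfl))

lemma qPt_mem (n i : ℤ) (h0 : 0 ≤ i)
    (h : i ≤ (if Odd n then (n - 1) / 2 else (n - 2) / 2)) : qPt n i ∈ Pset n :=
  Or.inl (Or.inr ⟨i, h0, h, rfl⟩)

lemma rPt_mem (n j : ℤ) (h0 : 0 ≤ j)
    (h : j ≤ (if Odd n then (n - 1) / 2 else n / 2)) : rPt n j ∈ Pset n :=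
  Or.inr ⟨j, h0, h, rfl⟩

lemma mem_Padd {n : ℤ} {x p m : ℤ × ℤ} (hp : p ∈ Pset n) (hm : m ∈ sigmaZ)
    (hx : x = p + m) : x ∈ Pset n + sigmaZ :=
  hx ▸ Set.add_mem_add hp hm

lemma eq_pair {x : ℤ × ℤ} {A B C D : ℤ} (h1 : x.1 = A + C) (h2 : x.2 = B + D) :
    x = ((A, B) : ℤ × ℤ) + (C, D) :=
  Prod.ext_iff.2 ⟨h1, h2⟩

/-- The key step: if `(1,1)+x ∈ P_{n+1} + σ` and `x ∈ σ`, then `x ∈ P_n + σ`. -/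
lemma key (n : ℤ) (hn : 1 ≤ n) (x : ℤ × ℤ) (hx : x ∈ sigmaZ)
    (h : ((1, 1) : ℤ × ℤ) + x ∈ Pset (n + 1) + sigmaZ) : x ∈ Pset n + sigmaZ := by
  obtain ⟨hx1, hx2⟩ := hx
  rw [Set.mem_add] at h
  obtain ⟨p, hp, m, hm, hpm⟩ := h
  obtain ⟨hm1, hm2⟩ := hm
  rcases Int.even_or_odd n with ⟨k, hk⟩ | ⟨k, hk⟩
  · -- n = 2k even, n+1 odd
    have hkn : n = 2 * k := by omega
    have hne : ¬ Odd n := by simp [hkn, Int.odd_iff]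
    have hNo : Odd (n + 1) := ⟨k, by omega⟩
    have hPp : pPt n = ((k + 1 : ℤ), 0) := by
      simp only [pPt, if_neg hne, Prod.mk.injEq, and_true]; omega
    have hPs : sPt n = ((3 * k + 3 : ℤ), 4 * k + 4) := by
      simp only [sPt, if_neg hne, Prod.mk.injEq, and_true]; omega
    have hNp : pPt (n + 1) = ((k + 2 : ℤ), 0) := by
      simp only [pPt, if_pos hNo, Prod.mk.injEq, and_true]; omega
    have hNs : sPt (n + 1) = ((3 * k + 3 : ℤ), 4 * k + 4) := by
      simp only [sPt, if_pos hNo, Prod.mk.injEq, and_true]; omega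
    simp only [Pset, Set.mem_union, Set.mem_insert_iff, Set.mem_singleton_iff,
      Set.mem_setOf_eq] at hp
    rcases hp with ((rfl | rfl) | ⟨i, hi0, hiub, rfl⟩) | ⟨j, hj0, hjub, rfl⟩
    · -- p = pPt (n+1) = (k+2, 0)
      rw [hNp] at hpm
      have e1 : k + 2 + m.1 = 1 + x.1 := congrArg Prod.fst hpm
      have e2 : 0 + m.2 = 1 + x.2 := congrArg Prod.snd hpm
      exact mem_Padd (hPp ▸ pPt_mem n)
        (mem_sigmaZ (u := m.1) (v := m.2 - 1) (by omega) (by omega))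
        (eq_pair (by omega) (by omega))
    · -- p = sPt (n+1) = (3k+3, 4k+4)
      rw [hNs] at hpm
      have e1 : 3 * k + 3 + m.1 = 1 + x.1 := congrArg Prod.fst hpm
      have e2 : 4 * k + 4 + m.2 = 1 + x.2 := congrArg Prod.snd hpm
      have hkey : 3 * m.2 + 1 ≤ 4 * m.1 := by omega
      rcases le_or_gt 1 m.2 with hc | hc
      · exact mem_Padd (hPs ▸ sPt_mem n)
          (mem_sigmaZ (u := m.1 - 1) (v := m.2 - 1) (by omega) (by omega))
          (eq_pair (by omega) (by omega))
      · -- m.2 = 0, use r^k = (3k+1, 4k+1)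
        have hq : rPt n k = ((3 * k + 1 : ℤ), 4 * k + 1) := by
          simp only [rPt, Prod.mk.injEq, and_true]; omega
        exact mem_Padd (hq ▸ rPt_mem n k (by omega) (by rw [if_neg hne]; omega))
          (mem_sigmaZ (u := m.1 + 1) (v := 2) (by omega) (by omega))
          (eq_pair (by omega) (by omega))
    · -- p = qPt (n+1) i, 0 ≤ i ≤ ((n+1)-1)/2 = k
      rw [if_pos hNo] at hiub
      have e1 : (n + 1 + 1 - i) + m.1 = 1 + x.1 := congrArg Prod.fst hpm
      have e2 : (n + 1 - 2 * i) + m.2 = 1 + x.2 := congrArg Prod.snd hpm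
      rcases le_or_gt i (k - 1) with hc | hc
      · exact mem_Padd (qPt_mem n i hi0 (by rw [if_neg hne]; omega))
          (mem_sigmaZ (u := m.1) (v := m.2) hm1 hm2)
          (eq_pair (by omega) (by omega))
      · -- i = k, qPt (n+1) k = (k+2, 1) = (1,1) + pPt n
        exact mem_Padd (hPp ▸ pPt_mem n)
          (mem_sigmaZ (u := m.1) (v := m.2) hm1 hm2)
          (eq_pair (by omega) (by omega))
    · -- p = rPt (n+1) j, 0 ≤ j ≤ k
      rw [if_pos hNo] at hjub
      have e1 : (n + 1 + 1 + j) + m.1 = 1 + x.1 := congrArg Prod.fst hpm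
      have e2 : (n + 1 + 1 + 2 * j) + m.2 = 1 + x.2 := congrArg Prod.snd hpm
      exact mem_Padd (rPt_mem n j hj0 (by rw [if_neg hne]; omega))
        (mem_sigmaZ (u := m.1) (v := m.2) hm1 hm2)
        (eq_pair (by omega) (by omega))
  · -- n = 2k+1 odd, n+1 even
    have hkn : n = 2 * k + 1 := hk
    have ho : Odd n := ⟨k, hk⟩
    have hNe : ¬ Odd (n + 1) := by
      rw [Int.not_odd_iff_even]; exact ⟨k + 1, by omega⟩
    have hPp : pPt n = ((k + 2 : ℤ), 0) := by
      simp only [pPt, if_pos ho, Prod.mk.injEq, and_true]; omega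
    have hPs : sPt n = ((3 * k + 3 : ℤ), 4 * k + 4) := by
      simp only [sPt, if_pos ho, Prod.mk.injEq, and_true]; omega
    have hNp : pPt (n + 1) = ((k + 2 : ℤ), 0) := by
      simp only [pPt, if_neg hNe, Prod.mk.injEq, and_true]; omega
    have hNs : sPt (n + 1) = ((3 * k + 6 : ℤ), 4 * k + 8) := by
      simp only [sPt, if_neg hNe, Prod.mk.injEq, and_true]; omega
    simp only [Pset, Set.mem_union, Set.mem_insert_iff, Set.mem_singleton_iff,
      Set.mem_setOf_eq] at hp
    rcases hp with ((rfl | rfl) | ⟨i, hi0, hiub, rfl⟩) | ⟨j, hj0, hjub, rfl⟩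
    · -- p = pPt (n+1) = (k+2, 0)
      rw [hNp] at hpm
      have e1 : k + 2 + m.1 = 1 + x.1 := congrArg Prod.fst hpm
      have e2 : 0 + m.2 = 1 + x.2 := congrArg Prod.snd hpm
      rcases eq_or_lt_of_le hm2 with heq | hlt
      · -- 3 m2 = 4 m1, so m1 = 3t, m2 = 4t, t ≥ 1
        obtain ⟨t, ht1, ht2⟩ : ∃ t, m.1 = 3 * t ∧ m.2 = 4 * t := ⟨m.2 / 4, by omega, by omega⟩
        have ht : 1 ≤ t := by omega
        rcases le_or_gt (4 * t) (2 * k + 2) with h1 | h1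
        · -- q^{k+1-2t} = (k+1+2t, 4t-1), m' = (t, 0)
          have hq : qPt n (k + 1 - 2 * t) = ((k + 1 + 2 * t : ℤ), 4 * t - 1) := by
            simp only [qPt, Prod.mk.injEq, and_true]; omega
          exact mem_Padd (hq ▸ qPt_mem n (k + 1 - 2 * t) (by omega)
              (by rw [if_pos ho]; omega))
            (mem_sigmaZ (u := t) (v := 0) (by omega) (by omega))
            (eq_pair (by omega) (by omega))
        · rcases le_or_gt (4 * t) (4 * k + 4) with h2 | h2
          · -- r^{2t-k-2} = (k+2t, 4t-2), m' = (t+1, 1)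
            have hr : rPt n (2 * t - k - 2) = ((k + 2 * t : ℤ), 4 * t - 2) := by
              simp only [rPt, Prod.mk.injEq, and_true]; omega
            exact mem_Padd (hr ▸ rPt_mem n (2 * t - k - 2) (by omega)
                (by rw [if_pos ho]; omega))
              (mem_sigmaZ (u := t + 1) (v := 1) (by omega) (by omega))
              (eq_pair (by omega) (by omega))
          · -- s_n, m' = (3t-2k-2, 4t-4k-5)
            exact mem_Padd (hPs ▸ sPt_mem n)
              (mem_sigmaZ (u := 3 * t - 2 * k - 2) (v := 4 * t - 4 * k - 5)
                (by omega) (by omega))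
              (eq_pair (by omega) (by omega))
      · -- 3 m2 < 4 m1: p_n, m' = (m1-1, m2-1)
        exact mem_Padd (hPp ▸ pPt_mem n)
          (mem_sigmaZ (u := m.1 - 1) (v := m.2 - 1) (by omega) (by omega))
          (eq_pair (by omega) (by omega))
    · -- p = sPt (n+1) = (3k+6, 4k+8)
      rw [hNs] at hpm
      have e1 : 3 * k + 6 + m.1 = 1 + x.1 := congrArg Prod.fst hpm
      have e2 : 4 * k + 8 + m.2 = 1 + x.2 := congrArg Prod.snd hpm
      exact mem_Padd (hPs ▸ sPt_mem n)
        (mem_sigmaZ (u := m.1 + 2) (v := m.2 + 3) (by omega) (by omega))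
        (eq_pair (by omega) (by omega))
    · -- p = qPt (n+1) i, 0 ≤ i ≤ ((n+1)-2)/2 = k
      rw [if_neg hNe] at hiub
      have e1 : (n + 1 + 1 - i) + m.1 = 1 + x.1 := congrArg Prod.fst hpm
      have e2 : (n + 1 - 2 * i) + m.2 = 1 + x.2 := congrArg Prod.snd hpm
      exact mem_Padd (qPt_mem n i hi0 (by rw [if_pos ho]; omega))
        (mem_sigmaZ (u := m.1) (v := m.2) hm1 hm2)
        (eq_pair (by omega) (by omega))
    · -- p = rPt (n+1) j, 0 ≤ j ≤ (n+1)/2 = k+1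
      rw [if_neg hNe] at hjub
      have e1 : (n + 1 + 1 + j) + m.1 = 1 + x.1 := congrArg Prod.fst hpm
      have e2 : (n + 1 + 1 + 2 * j) + m.2 = 1 + x.2 := congrArg Prod.snd hpm
      rcases le_or_gt j k with hc | hc
      · exact mem_Padd (rPt_mem n j hj0 (by rw [if_pos ho]; omega))
          (mem_sigmaZ (u := m.1) (v := m.2) hm1 hm2)
          (eq_pair (by omega) (by omega))
      · -- j = k+1: rPt (n+1) (k+1) = (1,1) + sPt n
        exact mem_Padd (hPs ▸ sPt_mem n)
          (mem_sigmaZ (u := m.1) (v := m.2) hm1 hm2)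
          (eq_pair (by omega) (by omega))

/-- for every integer `n ≥ 1`, the translate `(1,1) + D_n` is contained
in `D_{n+1}`. -/
theorem translate_Dset_subset (n : ℕ) (hn : 1 ≤ n) :
    (fun x => ((1, 1) : ℤ × ℤ) + x) '' Dset (n : ℤ) ⊆ Dset ((n : ℤ) + 1) := by
  rintro _ ⟨x, ⟨hxσ, hxP⟩, rfl⟩
  have hx1 := hxσ.1
  have hx2 := hxσ.2
  refine ⟨⟨?_, ?_⟩, fun h => hxP (key (n : ℤ) (by exact_mod_cast hn) x hxσ h)⟩
  · show (0 : ℤ) ≤ (((1, 1) : ℤ × ℤ) + x).2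
    simp only [Prod.snd_add]
    omega
  · show 3 * (((1, 1) : ℤ × ℤ) + x).2 ≤ 4 * (((1, 1) : ℤ × ℤ) + x).1
    simp only [Prod.fst_add, Prod.snd_add]
    omega
end

section
/- Let Φ: ℤ² → ℤ be the map (a,b) ↦ b − a. For every integer n ≥ 1: if n is odd then Φ(D_n) = {k ∈ ℤ : −(n+1)/2 ≤ k ≤ (n+1)/2 − 1}; if n is even then Φ(D_n) = {k ∈ ℤ : −n/2 ≤ k ≤ n/2}, and moreover the point (3n/2, 2n) is the unique element of D_n whose image under Φ equals n/2. -/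
open Pointwise

lemma mem_add_sigmaZ {P : Set (ℤ × ℤ)} {x : ℤ × ℤ} :
    x ∈ P + sigmaZ ↔ ∃ p ∈ P, p.2 ≤ x.2 ∧ 4 * p.1 - 3 * p.2 ≤ 4 * x.1 - 3 * x.2 := by
  constructor
  · rw [Set.mem_add]
    rintro ⟨p, hp, s, hs, rfl⟩
    obtain ⟨h1, h2⟩ := hs
    refine ⟨p, hp, ?_, ?_⟩ <;> simp only [Prod.fst_add, Prod.snd_add] <;> omega
  · rintro ⟨p, hp, h1, h2⟩
    rw [Set.mem_add]
    refine ⟨p, hp, x - p, ?_, by ring⟩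
    constructor <;> simp only [Prod.fst_sub, Prod.snd_sub] <;> omega

lemma mem_Pset_iff {n : ℤ} {p : ℤ × ℤ} :
    p ∈ Pset n ↔ p = pPt n ∨ p = sPt n ∨
      (∃ i : ℤ, 0 ≤ i ∧ i ≤ (if Odd n then (n - 1) / 2 else (n - 2) / 2) ∧ p = qPt n i) ∨
      (∃ j : ℤ, 0 ≤ j ∧ j ≤ (if Odd n then (n - 1) / 2 else n / 2) ∧ p = rPt n j) := by
  simp only [Pset, Set.mem_union, Set.mem_insert_iff, Set.mem_singleton_iff, Set.mem_setOf_eq,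
    or_assoc]

/-- let `Φ : ℤ² → ℤ`, `(a,b) ↦ b − a`.  For every integer `n ≥ 1`:
if `n` is odd then `Φ(D_n) = {k : −(n+1)/2 ≤ k ≤ (n+1)/2 − 1}`;
if `n` is even then `Φ(D_n) = {k : −n/2 ≤ k ≤ n/2}` and `(3n/2, 2n)` is the unique
element of `D_n` whose image under `Φ` is `n/2`. -/
theorem Phi_image_Dset (n : ℕ) (hn : 1 ≤ n) :
    (Odd n →
      (fun a : ℤ × ℤ => a.2 - a.1) '' Dset (n : ℤ) =
        Set.Icc (-(((n : ℤ) + 1) / 2)) (((n : ℤ) + 1) / 2 - 1)) ∧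
    (Even n →
      (fun a : ℤ × ℤ => a.2 - a.1) '' Dset (n : ℤ) =
        Set.Icc (-((n : ℤ) / 2)) ((n : ℤ) / 2) ∧
      (3 * (n : ℤ) / 2, 2 * (n : ℤ)) ∈ Dset (n : ℤ) ∧
      2 * (n : ℤ) - 3 * (n : ℤ) / 2 = (n : ℤ) / 2 ∧
      ∀ a ∈ Dset (n : ℤ), a.2 - a.1 = (n : ℤ) / 2 → a = (3 * (n : ℤ) / 2, 2 * (n : ℤ))) := by
  constructor
  · -- odd case
    intro hodd
    obtain ⟨m0, hm0⟩ := hodd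
    have hn1 : (n : ℤ) = 2 * (m0 : ℤ) + 1 := by exact_mod_cast hm0
    have hm0le : 0 ≤ (m0 : ℤ) := Int.natCast_nonneg _
    have hoddZ : Odd (n : ℤ) := ⟨(m0 : ℤ), hn1⟩
    ext k
    simp only [Set.mem_image, Set.mem_Icc]
    constructor
    · rintro ⟨⟨a, b⟩, hx, rfl⟩
      obtain ⟨⟨hb, hab⟩, hnmem⟩ := hx
      simp only at *
      constructor
      · -- lower bound: else dominated by pPt
        by_contra h
        apply hnmem
        rw [mem_add_sigmaZ]
        refine ⟨pPt (n : ℤ), mem_Pset_iff.mpr (Or.inl rfl), ?_, ?_⟩ <;>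
          simp only [pPt, if_pos hoddZ] <;> omega
      · -- upper bound: else dominated by sPt
        by_contra h
        apply hnmem
        rw [mem_add_sigmaZ]
        refine ⟨sPt (n : ℤ), mem_Pset_iff.mpr (Or.inr (Or.inl rfl)), ?_, ?_⟩ <;>
          simp only [sPt, if_pos hoddZ] <;> omega
    · rintro ⟨hk1, hk2⟩
      rcases le_or_gt 0 k with hk | hk
      · refine ⟨(3 * k, 4 * k), ⟨⟨by omega, by omega⟩, ?_⟩, by ring⟩
        intro hmem
        rw [mem_add_sigmaZ] at hmem
        obtain ⟨p, hp, hd1, hd2⟩ := hmem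
        rcases mem_Pset_iff.mp hp with rfl | rfl | ⟨i, hi0, hi1, rfl⟩ | ⟨j, hj0, hj1, rfl⟩ <;>
          simp only [pPt, sPt, qPt, rPt, if_pos hoddZ] at * <;> omega
      · refine ⟨(-k, 0), ⟨⟨by omega, by omega⟩, ?_⟩, by ring⟩
        intro hmem
        rw [mem_add_sigmaZ] at hmem
        obtain ⟨p, hp, hd1, hd2⟩ := hmem
        rcases mem_Pset_iff.mp hp with rfl | rfl | ⟨i, hi0, hi1, rfl⟩ | ⟨j, hj0, hj1, rfl⟩ <;>
          simp only [pPt, sPt, qPt, rPt, if_pos hoddZ] at * <;> omega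
  · -- even case
    intro heven
    obtain ⟨m0, hm0⟩ := heven
    have hn1 : (n : ℤ) = 2 * (m0 : ℤ) := by
      have h' : n = m0 + m0 := hm0
      push_cast [h']; ring
    have hm1 : 1 ≤ (m0 : ℤ) := by omega
    have hnoddZ : ¬ Odd (n : ℤ) := by
      rw [Int.not_odd_iff_even]; exact ⟨(m0 : ℤ), by omega⟩
    have hrmem : rPt (n : ℤ) (m0 : ℤ) ∈ Pset (n : ℤ) := by
      refine mem_Pset_iff.mpr (Or.inr (Or.inr (Or.inr ⟨(m0 : ℤ), by omega, ?_, rfl⟩)))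
      rw [if_neg hnoddZ]; omega
    refine ⟨?_, ?_, by omega, ?_⟩
    · ext k
      simp only [Set.mem_image, Set.mem_Icc]
      constructor
      · rintro ⟨⟨a, b⟩, hx, rfl⟩
        obtain ⟨⟨hb, hab⟩, hnmem⟩ := hx
        simp only at *
        constructor
        · by_contra h
          apply hnmem
          rw [mem_add_sigmaZ]
          refine ⟨pPt (n : ℤ), mem_Pset_iff.mpr (Or.inl rfl), ?_, ?_⟩ <;>
            simp only [pPt, if_neg hnoddZ] <;> omega
        · by_contra h
          apply hnmem
          rw [mem_add_sigmaZ]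
          refine ⟨sPt (n : ℤ), mem_Pset_iff.mpr (Or.inr (Or.inl rfl)), ?_, ?_⟩ <;>
            simp only [sPt, if_neg hnoddZ] <;> omega
      · rintro ⟨hk1, hk2⟩
        rcases le_or_gt 0 k with hk | hk
        · refine ⟨(3 * k, 4 * k), ⟨⟨by omega, by omega⟩, ?_⟩, by ring⟩
          intro hmem
          rw [mem_add_sigmaZ] at hmem
          obtain ⟨p, hp, hd1, hd2⟩ := hmem
          rcases mem_Pset_iff.mp hp with rfl | rfl | ⟨i, hi0, hi1, rfl⟩ | ⟨j, hj0, hj1, rfl⟩ <;>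
            simp only [pPt, sPt, qPt, rPt, if_neg hnoddZ] at * <;> omega
        · refine ⟨(-k, 0), ⟨⟨by omega, by omega⟩, ?_⟩, by ring⟩
          intro hmem
          rw [mem_add_sigmaZ] at hmem
          obtain ⟨p, hp, hd1, hd2⟩ := hmem
          rcases mem_Pset_iff.mp hp with rfl | rfl | ⟨i, hi0, hi1, rfl⟩ | ⟨j, hj0, hj1, rfl⟩ <;>
            simp only [pPt, sPt, qPt, rPt, if_neg hnoddZ] at * <;> omega
    · -- (3n/2, 2n) ∈ Dset n
      constructor
      · show (0:ℤ) ≤ 2 * (n : ℤ) ∧ 3 * (2 * (n : ℤ)) ≤ 4 * (3 * (n : ℤ) / 2)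
        omega
      · intro hmem
        rw [mem_add_sigmaZ] at hmem
        obtain ⟨p, hp, hd1, hd2⟩ := hmem
        simp only at hd1 hd2
        rcases mem_Pset_iff.mp hp with rfl | rfl | ⟨i, hi0, hi1, rfl⟩ | ⟨j, hj0, hj1, rfl⟩ <;>
          simp only [pPt, sPt, qPt, rPt, if_neg hnoddZ] at * <;> omega
    · -- uniqueness
      rintro ⟨a, b⟩ ⟨⟨hb, hab⟩, hnmem⟩ heq
      simp only at hb hab heq
      have hble : b ≤ 4 * (m0 : ℤ) := by
        by_contra h
        apply hnmem
        rw [mem_add_sigmaZ]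
        refine ⟨rPt (n : ℤ) (m0 : ℤ), hrmem, ?_, ?_⟩ <;> simp only [rPt] <;> omega
      rw [Prod.mk.injEq]
      omega
end

section
/- The four polynomials g₁ := u³v⁴ + u − 4uv + 2, g₂ := u²v² − 2uv + 1, g₃ := u²v − u − uv + 1 and g₄ := u² − 2u + 1 all lie in J_1 and generate J_1 as an ideal of S; their ≺-leading exponents are (3,4), (2,2), (2,1) and (2,0) respectively, each with leading coefficient 1; and every exponent in the support of each gᵢ other than its leading exponent lies in {(0,0), (1,0), (1,1)} (which is D_1). -/
set_option synthInstance.maxHeartbeats 1000000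
set_option maxHeartbeats 1000000

open Pointwise MvPolynomial

/-- The polynomial ring `ℂ[u,v]`. -/
abbrev CuvPoly : Type := MvPolynomial (Fin 2) ℂ

/-- The variable `u`. -/
noncomputable def uP : CuvPoly := X 0

/-- The variable `v`. -/
noncomputable def vP : CuvPoly := X 1

/-- `S`, the `ℂ`-subalgebra of `ℂ[u,v]` generated by `u`, `u³v⁴` and `uv`. -/
noncomputable def Ssub : Subalgebra ℂ CuvPoly :=
  Algebra.adjoin ℂ {uP, uP ^ 3 * vP ^ 4, uP * vP}

/-- `u` as an element of `S`. -/
noncomputable def U : Ssub := ⟨uP, Algebra.subset_adjoin (by simp)⟩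

/-- `u³v⁴` as an element of `S`. -/
noncomputable def Y : Ssub := ⟨uP ^ 3 * vP ^ 4, Algebra.subset_adjoin (by simp)⟩

/-- `uv` as an element of `S`. -/
noncomputable def UV : Ssub := ⟨uP * vP, Algebra.subset_adjoin (by simp)⟩

/-- The ideal `I = ⟨u−1, u³v⁴−1, uv−1⟩` of `S`. -/
noncomputable def Iid : Ideal Ssub := Ideal.span {U - 1, Y - 1, UV - 1}

/-- The ideal `J_n = I^{n+1}` of `S`. -/
noncomputable def Jid (n : ℕ) : Ideal Ssub := Iid ^ (n + 1)

/-- The monomial ordering `≺` on exponents in `ℤ²`, associated to the matrix with rows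
`(2,-1)` and `(1,1)`: `β ≺ α` iff `2β₁−β₂ < 2α₁−α₂`, or `2β₁−β₂ = 2α₁−α₂` and
`β₁+β₂ < α₁+α₂`. -/
def precLt (b a : ℤ × ℤ) : Prop :=
  2 * b.1 - b.2 < 2 * a.1 - a.2 ∨
    (2 * b.1 - b.2 = 2 * a.1 - a.2 ∧ b.1 + b.2 < a.1 + a.2)

/-- The monomial support of `f ∈ ℂ[u,v]`, as a finite set of points of `ℤ²`. -/
noncomputable def suppZ (f : CuvPoly) : Finset (ℤ × ℤ) :=
  f.support.image (fun m => ((m 0 : ℤ), (m 1 : ℤ)))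

/-- `α` is the `≺`-leading exponent of `f`: it lies in the support of `f` and is
`≺`-greater than every other exponent in the support. -/
def IsLeadExp (f : CuvPoly) (α : ℤ × ℤ) : Prop :=
  α ∈ suppZ f ∧ ∀ β ∈ suppZ f, β ≠ α → precLt β α

/-- The coefficient of the monomial `u^{α₁} v^{α₂}` in `f`. -/
noncomputable def coeffAt (f : CuvPoly) (α : ℤ × ℤ) : ℂ :=
  MvPolynomial.coeff (Finsupp.single 0 α.1.toNat + Finsupp.single 1 α.2.toNat) f

/-- `g₁ = u³v⁴ + u − 4uv + 2` as an element of `S`. -/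
noncomputable def G₁ : Ssub := Y + U - 4 * UV + 2

/-- `g₂ = u²v² − 2uv + 1` as an element of `S`. -/
noncomputable def G₂ : Ssub := UV ^ 2 - 2 * UV + 1

/-- `g₃ = u²v − u − uv + 1` as an element of `S`. -/
noncomputable def G₃ : Ssub := U * UV - U - UV + 1

/-- `g₄ = u² − 2u + 1` as an element of `S`. -/
noncomputable def G₄ : Ssub := U ^ 2 - 2 * U + 1

section AuxGroebner

lemma relUY : U * Y = UV ^ 4 := by
  apply Subtype.ext
  push_cast
  show uP * (uP ^ 3 * vP ^ 4) = (uP * vP) ^ 4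
  ring

lemma aMem : U - 1 ∈ Iid := Ideal.subset_span (by simp [Iid])
lemma bMem : Y - 1 ∈ Iid := Ideal.subset_span (by simp [Iid])
lemma cMem : UV - 1 ∈ Iid := Ideal.subset_span (by simp [Iid])

lemma G1eq : G₁ = (UV - 1) * ((UV - 1) * ((UV - 1) ^ 2 + 4 * (UV - 1) + 6)) - (U - 1) * (Y - 1) := by
  unfold G₁; linear_combination relUY

lemma J1eq : Jid 1 = Iid * Iid := by
  unfold Jid; rw [pow_succ, pow_one]

lemma G1memJ : G₁ ∈ Jid 1 := by
  rw [J1eq, G1eq]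
  exact sub_mem (Ideal.mul_mem_mul cMem (Ideal.mul_mem_right _ _ cMem))
    (Ideal.mul_mem_mul aMem bMem)
lemma G2memJ : G₂ ∈ Jid 1 := by
  rw [J1eq, show G₂ = (UV - 1) * (UV - 1) by unfold G₂; ring]
  exact Ideal.mul_mem_mul cMem cMem
lemma G3memJ : G₃ ∈ Jid 1 := by
  rw [J1eq, show G₃ = (U - 1) * (UV - 1) by unfold G₃; ring]
  exact Ideal.mul_mem_mul aMem cMem
lemma G4memJ : G₄ ∈ Jid 1 := by
  rw [J1eq, show G₄ = (U - 1) * (U - 1) by unfold G₄; ring]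
  exact Ideal.mul_mem_mul aMem aMem

noncomputable def Gspan : Ideal Ssub := Ideal.span {G₁, G₂, G₃, G₄}

lemma g1s : G₁ ∈ Gspan := Ideal.subset_span (by simp)
lemma g2s : G₂ ∈ Gspan := Ideal.subset_span (by simp)
lemma g3s : G₃ ∈ Gspan := Ideal.subset_span (by simp)
lemma g4s : G₄ ∈ Gspan := Ideal.subset_span (by simp)

lemma ab_mem : (U - 1) * (Y - 1) ∈ Gspan := by
  rw [show (U - 1) * (Y - 1) = G₂ * ((UV - 1) ^ 2 + 4 * (UV - 1) + 6) - G₁ by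
    unfold G₁ G₂; linear_combination relUY]
  exact sub_mem (Ideal.mul_mem_right _ _ g2s) g1s

lemma bc_mem : (Y - 1) * (UV - 1) ∈ Gspan := by
  rw [show (Y - 1) * (UV - 1) =
      G₂ * ((UV - 1) ^ 3 + 4 * (UV - 1) ^ 2 + 6 * (UV - 1) + 4) - G₃
        - ((U - 1) * (Y - 1)) * (UV - 1) by
    unfold G₂ G₃; linear_combination (UV - 1) * relUY]
  exact sub_mem (sub_mem (Ideal.mul_mem_right _ _ g2s) g3s) (Ideal.mul_mem_right _ _ ab_mem)

lemma bb_mem : (Y - 1) * (Y - 1) ∈ Gspan := by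
  rw [show (Y - 1) * (Y - 1) =
      ((Y - 1) * (UV - 1)) * ((UV - 1) ^ 3 + 4 * (UV - 1) ^ 2 + 6 * (UV - 1) + 4)
        - ((U - 1) * (Y - 1)) * (1 + (Y - 1)) by
    linear_combination (Y - 1) * relUY]
  exact sub_mem (Ideal.mul_mem_right _ _ bc_mem) (Ideal.mul_mem_right _ _ ab_mem)

lemma spanEq : Jid 1 = Gspan := by
  apply le_antisymm
  · rw [J1eq]
    unfold Iid
    rw [Ideal.span_mul_span']
    rw [Ideal.span_le]
    rintro x ⟨p, hp, q, hq, rfl⟩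
    simp only [Set.mem_insert_iff, Set.mem_singleton_iff] at hp hq
    rcases hp with rfl | rfl | rfl <;> rcases hq with rfl | rfl | rfl <;> beta_reduce
    · rw [show (U - 1) * (U - 1) = G₄ by unfold G₄; ring]; exact g4s
    · exact ab_mem
    · rw [show (U - 1) * (UV - 1) = G₃ by unfold G₃; ring]; exact g3s
    · rw [mul_comm]; exact ab_mem
    · exact bb_mem
    · exact bc_mem
    · rw [show (UV - 1) * (U - 1) = G₃ by unfold G₃; ring]; exact g3s
    · rw [mul_comm]; exact bc_mem
    · rw [show (UV - 1) * (UV - 1) = G₂ by unfold G₂; ring]; exact g2s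
  · unfold Gspan
    rw [Ideal.span_le]
    rintro x hx
    simp only [Set.mem_insert_iff, Set.mem_singleton_iff] at hx
    rcases hx with rfl | rfl | rfl | rfl
    exacts [G1memJ, G2memJ, G3memJ, G4memJ]
noncomputable def eExp (a b : ℕ) : Fin 2 →₀ ℕ := Finsupp.single 0 a + Finsupp.single 1 b

lemma eExp_apply0 (a b : ℕ) : eExp a b 0 = a := by
  simp [eExp, Finsupp.single_apply]
lemma eExp_apply1 (a b : ℕ) : eExp a b 1 = b := by
  simp [eExp, Finsupp.single_apply]

lemma eExp_eq_iff {a b c d : ℕ} : eExp a b = eExp c d ↔ a = c ∧ b = d := by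
  constructor
  · intro h
    constructor
    · have := DFunLike.congr_fun h 0; simpa [eExp_apply0] using this
    · have := DFunLike.congr_fun h 1; simpa [eExp_apply1] using this
  · rintro ⟨rfl, rfl⟩; rfl

lemma mon_eq (a b : ℕ) : (uP ^ a * vP ^ b : CuvPoly) = monomial (eExp a b) 1 := by
  rw [uP, vP, X_pow_eq_monomial, X_pow_eq_monomial, monomial_mul, eExp, one_mul]

lemma G1poly : (G₁ : CuvPoly)
    = monomial (eExp 3 4) 1 + monomial (eExp 1 0) 1 + monomial (eExp 1 1) (-4)
      + monomial (eExp 0 0) 2 := by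
  have : (G₁ : CuvPoly) = uP^3*vP^4 + uP - 4*(uP*vP) + 2 := by
    show ((Y + U - 4 * UV + 2 : Ssub) : CuvPoly) = _
    push_cast
    show uP ^ 3 * vP ^ 4 + uP - 4 * (uP * vP) + 2 = _
    rfl
  rw [this]
  have h1 := mon_eq 3 4
  have h2 := mon_eq 1 0
  simp only [pow_one, pow_zero, mul_one, one_mul] at h2
  rw [← h1, ← h2]
  rw [show ((monomial (eExp 0 0)) (2:ℂ)) = C 2 * (uP^0*vP^0) by rw [mon_eq]; simp [C_mul_monomial],
    show ((monomial (eExp 1 1)) (-4:ℂ)) = C (-4) * (uP*vP) by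
      rw [show (uP*vP : CuvPoly) = uP^1*vP^1 by ring, mon_eq]; simp [C_mul_monomial]]
  simp [map_ofNat]
  ring

lemma G2poly : (G₂ : CuvPoly)
    = monomial (eExp 2 2) 1 + monomial (eExp 1 1) (-2) + monomial (eExp 0 0) 1 := by
  have : (G₂ : CuvPoly) = uP^2*vP^2 - 2*(uP*vP) + 1 := by
    show ((UV ^ 2 - 2 * UV + 1 : Ssub) : CuvPoly) = _
    push_cast
    show (uP * vP) ^ 2 - 2 * (uP * vP) + 1 = _
    ring
  rw [this, ← mon_eq 2 2]
  rw [show ((monomial (eExp 0 0)) (1:ℂ)) = C 1 * (uP^0*vP^0) by rw [mon_eq]; simp [C_mul_monomial],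
    show ((monomial (eExp 1 1)) (-2:ℂ)) = C (-2) * (uP*vP) by
      rw [show (uP*vP : CuvPoly) = uP^1*vP^1 by ring, mon_eq]; simp [C_mul_monomial]]
  simp [map_ofNat]
  ring

lemma G3poly : (G₃ : CuvPoly)
    = monomial (eExp 2 1) 1 + monomial (eExp 1 0) (-1) + monomial (eExp 1 1) (-1)
      + monomial (eExp 0 0) 1 := by
  have : (G₃ : CuvPoly) = uP^2*vP^1 - uP - uP*vP + 1 := by
    show ((U * UV - U - UV + 1 : Ssub) : CuvPoly) = _
    push_cast
    show uP * (uP * vP) - uP - uP * vP + 1 = _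
    ring
  rw [this, ← mon_eq 2 1]
  rw [show ((monomial (eExp 0 0)) (1:ℂ)) = C 1 * (uP^0*vP^0) by rw [mon_eq]; simp [C_mul_monomial],
    show ((monomial (eExp 1 1)) (-1:ℂ)) = C (-1) * (uP*vP) by
      rw [show (uP*vP : CuvPoly) = uP^1*vP^1 by ring, mon_eq]; simp [C_mul_monomial],
    show ((monomial (eExp 1 0)) (-1:ℂ)) = C (-1) * uP by
      rw [show (uP : CuvPoly) = uP^1*vP^0 by ring, mon_eq]; simp [C_mul_monomial]]
  simp [map_ofNat]
  ring

lemma G4poly : (G₄ : CuvPoly)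
    = monomial (eExp 2 0) 1 + monomial (eExp 1 0) (-2) + monomial (eExp 0 0) 1 := by
  have : (G₄ : CuvPoly) = uP^2*vP^0 - 2*uP + 1 := by
    show ((U ^ 2 - 2 * U + 1 : Ssub) : CuvPoly) = _
    push_cast
    show uP ^ 2 - 2 * uP + 1 = _
    ring
  rw [this, ← mon_eq 2 0]
  rw [show ((monomial (eExp 0 0)) (1:ℂ)) = C 1 * (uP^0*vP^0) by rw [mon_eq]; simp [C_mul_monomial],
    show ((monomial (eExp 1 0)) (-2:ℂ)) = C (-2) * uP by
      rw [show (uP : CuvPoly) = uP^1*vP^0 by ring, mon_eq]; simp [C_mul_monomial]]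
  simp [map_ofNat]
  ring

lemma G1supp : ∀ m ∈ (G₁ : CuvPoly).support,
    m = eExp 3 4 ∨ m = eExp 1 0 ∨ m = eExp 1 1 ∨ m = eExp 0 0 := by
  intro m hm
  by_contra hne
  push_neg at hne
  obtain ⟨h1, h2, h3, h4⟩ := hne
  rw [mem_support_iff, G1poly] at hm
  simp [coeff_add, coeff_monomial, Ne.symm h1, Ne.symm h2, Ne.symm h3, Ne.symm h4] at hm

lemma G2supp : ∀ m ∈ (G₂ : CuvPoly).support,
    m = eExp 2 2 ∨ m = eExp 1 1 ∨ m = eExp 0 0 := by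
  intro m hm
  by_contra hne
  push_neg at hne
  obtain ⟨h1, h2, h3⟩ := hne
  rw [mem_support_iff, G2poly] at hm
  simp [coeff_add, coeff_monomial, Ne.symm h1, Ne.symm h2, Ne.symm h3] at hm

lemma G3supp : ∀ m ∈ (G₃ : CuvPoly).support,
    m = eExp 2 1 ∨ m = eExp 1 0 ∨ m = eExp 1 1 ∨ m = eExp 0 0 := by
  intro m hm
  by_contra hne
  push_neg at hne
  obtain ⟨h1, h2, h3, h4⟩ := hne
  rw [mem_support_iff, G3poly] at hm
  simp [coeff_add, coeff_monomial, Ne.symm h1, Ne.symm h2, Ne.symm h3, Ne.symm h4] at hm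

lemma G4supp : ∀ m ∈ (G₄ : CuvPoly).support,
    m = eExp 2 0 ∨ m = eExp 1 0 ∨ m = eExp 0 0 := by
  intro m hm
  by_contra hne
  push_neg at hne
  obtain ⟨h1, h2, h3⟩ := hne
  rw [mem_support_iff, G4poly] at hm
  simp [coeff_add, coeff_monomial, Ne.symm h1, Ne.symm h2, Ne.symm h3] at hm

lemma G1lead : coeff (eExp 3 4) (G₁ : CuvPoly) = 1 := by
  rw [G1poly]; simp [coeff_add, coeff_monomial, eExp_eq_iff]
lemma G2lead : coeff (eExp 2 2) (G₂ : CuvPoly) = 1 := by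
  rw [G2poly]; simp [coeff_add, coeff_monomial, eExp_eq_iff]
lemma G3lead : coeff (eExp 2 1) (G₃ : CuvPoly) = 1 := by
  rw [G3poly]; simp [coeff_add, coeff_monomial, eExp_eq_iff]
lemma G4lead : coeff (eExp 2 0) (G₄ : CuvPoly) = 1 := by
  rw [G4poly]; simp [coeff_add, coeff_monomial, eExp_eq_iff]

lemma lead_mem_suppZ {f : CuvPoly} {a b : ℕ} (h : coeff (eExp a b) f = 1) :
    ((a : ℤ), (b : ℤ)) ∈ suppZ f := by
  apply Finset.mem_image.2
  exact ⟨eExp a b, mem_support_iff.2 (by rw [h]; norm_num),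
    by simp [eExp_apply0, eExp_apply1]⟩

lemma isLead1 : IsLeadExp (G₁ : CuvPoly) (3, 4) := by
  constructor
  · exact_mod_cast lead_mem_suppZ G1lead
  · intro β hβ hne
    obtain ⟨m, hm, rfl⟩ := Finset.mem_image.1 hβ
    rcases G1supp m hm with rfl | rfl | rfl | rfl <;>
      simp_all [eExp_apply0, eExp_apply1, precLt, Prod.ext_iff]

lemma isLead2 : IsLeadExp (G₂ : CuvPoly) (2, 2) := by
  constructor
  · exact_mod_cast lead_mem_suppZ G2lead
  · intro β hβ hne
    obtain ⟨m, hm, rfl⟩ := Finset.mem_image.1 hβ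
    rcases G2supp m hm with rfl | rfl | rfl <;>
      simp_all [eExp_apply0, eExp_apply1, precLt, Prod.ext_iff]

lemma isLead3 : IsLeadExp (G₃ : CuvPoly) (2, 1) := by
  constructor
  · exact_mod_cast lead_mem_suppZ G3lead
  · intro β hβ hne
    obtain ⟨m, hm, rfl⟩ := Finset.mem_image.1 hβ
    rcases G3supp m hm with rfl | rfl | rfl | rfl <;>
      simp_all [eExp_apply0, eExp_apply1, precLt, Prod.ext_iff]

lemma isLead4 : IsLeadExp (G₄ : CuvPoly) (2, 0) := by
  constructor
  · exact_mod_cast lead_mem_suppZ G4lead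
  · intro β hβ hne
    obtain ⟨m, hm, rfl⟩ := Finset.mem_image.1 hβ
    rcases G4supp m hm with rfl | rfl | rfl <;>
      simp_all [eExp_apply0, eExp_apply1, precLt, Prod.ext_iff]

lemma coeffAt1 : coeffAt (G₁ : CuvPoly) (3, 4) = 1 := by
  show coeff (Finsupp.single 0 ((3:ℤ).toNat) + Finsupp.single 1 ((4:ℤ).toNat)) _ = 1
  exact G1lead
lemma coeffAt2 : coeffAt (G₂ : CuvPoly) (2, 2) = 1 := by
  show coeff (Finsupp.single 0 ((2:ℤ).toNat) + Finsupp.single 1 ((2:ℤ).toNat)) _ = 1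
  exact G2lead
lemma coeffAt3 : coeffAt (G₃ : CuvPoly) (2, 1) = 1 := by
  show coeff (Finsupp.single 0 ((2:ℤ).toNat) + Finsupp.single 1 ((1:ℤ).toNat)) _ = 1
  norm_num
  exact G3lead
lemma coeffAt4 : coeffAt (G₄ : CuvPoly) (2, 0) = 1 := by
  show coeff (Finsupp.single 0 ((2:ℤ).toNat) + Finsupp.single 1 ((0:ℤ).toNat)) _ = 1
  exact G4lead

lemma tail1 : ∀ β ∈ suppZ (G₁ : CuvPoly), β ≠ (3, 4) →
    β ∈ ({(0, 0), (1, 0), (1, 1)} : Set (ℤ × ℤ)) := by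
  intro β hβ hne
  obtain ⟨m, hm, rfl⟩ := Finset.mem_image.1 hβ
  rcases G1supp m hm with rfl | rfl | rfl | rfl <;>
    simp_all [eExp_apply0, eExp_apply1, Prod.ext_iff]

lemma tail2 : ∀ β ∈ suppZ (G₂ : CuvPoly), β ≠ (2, 2) →
    β ∈ ({(0, 0), (1, 0), (1, 1)} : Set (ℤ × ℤ)) := by
  intro β hβ hne
  obtain ⟨m, hm, rfl⟩ := Finset.mem_image.1 hβ
  rcases G2supp m hm with rfl | rfl | rfl <;>
    simp_all [eExp_apply0, eExp_apply1, Prod.ext_iff]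

lemma tail3 : ∀ β ∈ suppZ (G₃ : CuvPoly), β ≠ (2, 1) →
    β ∈ ({(0, 0), (1, 0), (1, 1)} : Set (ℤ × ℤ)) := by
  intro β hβ hne
  obtain ⟨m, hm, rfl⟩ := Finset.mem_image.1 hβ
  rcases G3supp m hm with rfl | rfl | rfl | rfl <;>
    simp_all [eExp_apply0, eExp_apply1, Prod.ext_iff]

lemma tail4 : ∀ β ∈ suppZ (G₄ : CuvPoly), β ≠ (2, 0) →
    β ∈ ({(0, 0), (1, 0), (1, 1)} : Set (ℤ × ℤ)) := by
  intro β hβ hne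
  obtain ⟨m, hm, rfl⟩ := Finset.mem_image.1 hβ
  rcases G4supp m hm with rfl | rfl | rfl <;>
    simp_all [eExp_apply0, eExp_apply1, Prod.ext_iff]

lemma Pset1 : Pset 1 = ({(2, 0), (3, 4), (2, 1), (2, 2)} : Set (ℤ × ℤ)) := by
  have hodd : Odd (1 : ℤ) := ⟨0, by ring⟩
  have hp : pPt 1 = (2, 0) := by norm_num [pPt, hodd]
  have hs : sPt 1 = (3, 4) := by norm_num [sPt, hodd]
  ext x
  simp only [Pset, if_pos hodd, Set.mem_union, Set.mem_setOf_eq, Set.mem_insert_iff,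
    Set.mem_singleton_iff, hp, hs]
  constructor
  · rintro (((rfl | rfl) | ⟨i, h0, h1, rfl⟩) | ⟨j, h0, h1, rfl⟩)
    · tauto
    · tauto
    · have : i = 0 := by omega
      subst this
      right; right; left; norm_num [qPt]
    · have : j = 0 := by omega
      subst this
      right; right; right; norm_num [rPt]
  · rintro (rfl | rfl | rfl | rfl)
    · tauto
    · tauto
    · exact Or.inl (Or.inr ⟨0, le_refl 0, by norm_num, by norm_num [qPt]⟩)
    · exact Or.inr ⟨0, le_refl 0, by norm_num, by norm_num [rPt]⟩

lemma Dset1 : Dset 1 = ({(0, 0), (1, 0), (1, 1)} : Set (ℤ × ℤ)) := by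
  ext ⟨a, b⟩
  rw [Dset, Pset1]
  constructor
  · rintro ⟨⟨hb0, hab0⟩, hnot⟩
    have hb : (0 : ℤ) ≤ b := hb0
    have hab : 3 * b ≤ 4 * a := hab0
    by_contra hne
    simp only [Set.mem_insert_iff, Set.mem_singleton_iff, Prod.mk.injEq, not_or, not_and] at hne
    apply hnot
    rw [Set.mem_add]
    rcases le_or_gt 4 b with h4 | h4
    · refine ⟨(3, 4), by norm_num, (a - 3, b - 4), ⟨show (0:ℤ) ≤ b - 4 by omega,
        show 3 * (b - 4) ≤ 4 * (a - 3) by omega⟩, ?_⟩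
      rw [Prod.mk_add_mk]; simp only [Prod.mk.injEq]; constructor <;> omega
    · interval_cases b
      · refine ⟨(2, 0), by norm_num, (a - 2, 0), ⟨le_refl 0,
          show 3 * (0:ℤ) ≤ 4 * (a - 2) by omega⟩, ?_⟩
        rw [Prod.mk_add_mk]; simp only [Prod.mk.injEq]; constructor <;> omega
      · refine ⟨(2, 1), by norm_num, (a - 2, 0), ⟨le_refl 0,
          show 3 * (0:ℤ) ≤ 4 * (a - 2) by omega⟩, ?_⟩
        rw [Prod.mk_add_mk]; simp only [Prod.mk.injEq]; constructor <;> omega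
      · refine ⟨(2, 2), by norm_num, (a - 2, 0), ⟨le_refl 0,
          show 3 * (0:ℤ) ≤ 4 * (a - 2) by omega⟩, ?_⟩
        rw [Prod.mk_add_mk]; simp only [Prod.mk.injEq]; constructor <;> omega
      · refine ⟨(2, 2), by norm_num, (a - 2, 1), ⟨zero_le_one,
          show 3 * (1:ℤ) ≤ 4 * (a - 2) by omega⟩, ?_⟩
        rw [Prod.mk_add_mk]; simp only [Prod.mk.injEq]; constructor <;> omega
  · intro h
    have hmem : (a = 0 ∧ b = 0) ∨ (a = 1 ∧ b = 0) ∨ (a = 1 ∧ b = 1) := by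
      rcases h with h | h | h <;> simp [Prod.ext_iff] at h <;> tauto
    constructor
    · exact ⟨show (0:ℤ) ≤ b by omega, show 3 * b ≤ 4 * a by omega⟩
    · rintro ⟨p, hp, s, hs, heq⟩
      obtain ⟨hs1, hs2⟩ := hs
      simp only [Set.mem_insert_iff, Set.mem_singleton_iff] at hp
      have h1 := congrArg Prod.fst heq
      have h2 := congrArg Prod.snd heq
      simp only [Prod.fst_add, Prod.snd_add] at h1 h2
      rcases hp with rfl | rfl | rfl | rfl <;> simp at h1 h2 <;> omega

end AuxGroebner

/-- `g₁, g₂, g₃, g₄` all lie in `J_1` and generate `J_1` as an ideal of `S`;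
their `≺`-leading exponents are `(3,4)`, `(2,2)`, `(2,1)`, `(2,0)` respectively, each with
leading coefficient `1`; and every other exponent in each support lies in
`{(0,0), (1,0), (1,1)}` (which is `D_1`). -/
theorem reduced_groebner_basis_J1 :
    (G₁ ∈ Jid 1 ∧ G₂ ∈ Jid 1 ∧ G₃ ∈ Jid 1 ∧ G₄ ∈ Jid 1) ∧
    Jid 1 = Ideal.span {G₁, G₂, G₃, G₄} ∧
    (IsLeadExp (G₁ : CuvPoly) (3, 4) ∧ coeffAt (G₁ : CuvPoly) (3, 4) = 1) ∧
    (IsLeadExp (G₂ : CuvPoly) (2, 2) ∧ coeffAt (G₂ : CuvPoly) (2, 2) = 1) ∧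
    (IsLeadExp (G₃ : CuvPoly) (2, 1) ∧ coeffAt (G₃ : CuvPoly) (2, 1) = 1) ∧
    (IsLeadExp (G₄ : CuvPoly) (2, 0) ∧ coeffAt (G₄ : CuvPoly) (2, 0) = 1) ∧
    (∀ β ∈ suppZ (G₁ : CuvPoly), β ≠ (3, 4) → β ∈ ({(0, 0), (1, 0), (1, 1)} : Set (ℤ × ℤ))) ∧
    (∀ β ∈ suppZ (G₂ : CuvPoly), β ≠ (2, 2) → β ∈ ({(0, 0), (1, 0), (1, 1)} : Set (ℤ × ℤ))) ∧
    (∀ β ∈ suppZ (G₃ : CuvPoly), β ≠ (2, 1) → β ∈ ({(0, 0), (1, 0), (1, 1)} : Set (ℤ × ℤ))) ∧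
    (∀ β ∈ suppZ (G₄ : CuvPoly), β ≠ (2, 0) → β ∈ ({(0, 0), (1, 0), (1, 1)} : Set (ℤ × ℤ))) ∧
    Dset 1 = ({(0, 0), (1, 0), (1, 1)} : Set (ℤ × ℤ)) :=
  ⟨⟨G1memJ, G2memJ, G3memJ, G4memJ⟩, spanEq,
   ⟨isLead1, coeffAt1⟩, ⟨isLead2, coeffAt2⟩, ⟨isLead3, coeffAt3⟩, ⟨isLead4, coeffAt4⟩,
   tail1, tail2, tail3, tail4, Dset1⟩
end
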